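/- Let n ≥ 1 and l ≥ 4 be integers, let e₁,…,eₙ ∈ {+1, −1}, and in the polynomial ring ℂ[z₁,…,zₙ, ζ₁,…,ζₙ] set h = e₁z₁ζ₁ + ⋯ + eₙzₙζₙ (the hyperquadric Hermitian form, with ζᵢ playing the role of the conjugate variable z̄ᵢ). Let F be a nonzero polynomial that is bihomogeneous of type (2, l−2), i.e., homogeneous of degree 2 in the variables z₁,…,zₙ and homogeneous of degree l−2 in the variables ζ₁,…,ζₙ. Then the n polynomials H_α = ∂(h·F)/∂z_α, for α = 1,…,n, are linearly independent over ℂ. -/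

import Mathlib

open MvPolynomial

/-- Weight function picking out the degree in the `z`-variables (`Sum.inl`). -/
def zWeight (n : ℕ) : Fin n ⊕ Fin n → ℕ := Sum.elim (fun _ => 1) (fun _ => 0)

/-- Weight function picking out the degree in the `ζ`-variables (`Sum.inr`). -/
def zetaWeight (n : ℕ) : Fin n ⊕ Fin n → ℕ := Sum.elim (fun _ => 0) (fun _ => 1)

lemma coeff_pderiv' {σ : Type*} [DecidableEq σ] (i : σ) (p : MvPolynomial σ ℂ) (d : σ →₀ ℕ) :
    coeff d (pderiv i p) = (d i + 1 : ℂ) * coeff (d + Finsupp.single i 1) p := by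
  induction p using MvPolynomial.induction_on' with
  | monomial s a =>
    rw [pderiv_monomial, coeff_monomial, coeff_monomial]
    by_cases hs : s = d + Finsupp.single i 1
    · subst hs
      rw [add_tsub_cancel_right, if_pos rfl, if_pos rfl]
      simp only [Finsupp.add_apply, Finsupp.single_eq_same]
      push_cast; ring
    · rw [if_neg hs, mul_zero]
      split_ifs with h2
      · by_cases hsi : s i = 0
        · simp [hsi]
        · exfalso
          apply hs
          have hle : Finsupp.single i 1 ≤ s := by
            rw [Finsupp.single_le_iff]; omega
          rw [← h2, tsub_add_cancel_of_le hle]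
      · rfl
  | add p q hp hq => simp [hp, hq, mul_add]

lemma weight_single_one {σ M : Type*} [AddCommMonoid M] (w : σ → M) (i : σ) :
    Finsupp.weight w (Finsupp.single i 1) = w i := by
  simp [Finsupp.weight_apply, Finsupp.sum_single_index]

lemma pderiv_isWH {n : ℕ} {p : MvPolynomial (Fin n ⊕ Fin n) ℂ} {m : ℕ} (α : Fin n)
    (hp : p.IsWeightedHomogeneous (zWeight n) (m + 1)) :
    (pderiv (Sum.inl α) p).IsWeightedHomogeneous (zWeight n) m := by
  intro d hd
  rw [coeff_pderiv'] at hd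
  have h2 : coeff (d + Finsupp.single (Sum.inl α) 1) p ≠ 0 := by
    intro h; rw [h, mul_zero] at hd; exact hd rfl
  have h3 := hp h2
  rw [map_add, weight_single_one] at h3
  have h4 : zWeight n (Sum.inl α) = 1 := rfl
  rw [h4] at h3
  omega

lemma pderiv_eq_zero_of_isWH_zero {n : ℕ} {p : MvPolynomial (Fin n ⊕ Fin n) ℂ} (α : Fin n)
    (hp : p.IsWeightedHomogeneous (zWeight n) 0) :
    pderiv (Sum.inl α) p = 0 := by
  ext d
  rw [coeff_pderiv', coeff_zero]
  have h2 : coeff (d + Finsupp.single (Sum.inl α) 1) p = 0 := by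
    by_contra h
    have h3 := hp h
    rw [map_add, weight_single_one] at h3
    have h4 : zWeight n (Sum.inl α) = 1 := rfl
    rw [h4] at h3
    omega
  rw [h2, mul_zero]

lemma prime_X_mv {σ : Type*} (s : σ) : Prime (X s : MvPolynomial σ ℂ) := by
  classical
  have h1 : (X s : MvPolynomial σ ℂ)
      = rename ((↑) : ({s} : Set σ) → σ) (X ⟨s, rfl⟩) := by simp
  rw [h1, MvPolynomial.prime_rename_iff]
  haveI : Unique ({s} : Set σ) := by infer_instance
  let e1 : ({s} : Set σ) ≃ PUnit.{1} := Equiv.equivPUnit _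
  apply (MulEquiv.prime_iff (renameEquiv ℂ e1).toMulEquiv).1
  have h3 : (renameEquiv ℂ e1).toMulEquiv (X (⟨s, rfl⟩ : ({s} : Set σ)))
      = X (e1 ⟨s, rfl⟩) := by
    show (renameEquiv ℂ e1) (X (⟨s, rfl⟩ : ({s} : Set σ))) = X (e1 ⟨s, rfl⟩)
    simp
  rw [h3]
  apply (MulEquiv.prime_iff (pUnitAlgEquiv ℂ).toMulEquiv).1
  have h2 : (pUnitAlgEquiv ℂ).toMulEquiv (X (e1 ⟨s, rfl⟩)) = Polynomial.X := by
    show (pUnitAlgEquiv ℂ) (X (e1 ⟨s, rfl⟩)) = Polynomial.X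
    simp [pUnitAlgEquiv]
  rw [h2]
  exact Polynomial.prime_X

/-- Let `h = e₁ z₁ ζ₁ + ⋯ + eₙ zₙ ζₙ` with each `eᵢ = ±1`, and let `F ≠ 0` be a
polynomial bihomogeneous of type `(2, l-2)`, i.e. homogeneous of degree `2` in
the `z`-variables and of degree `l-2` in the `ζ`-variables, with `l ≥ 4`.
Then the `n` polynomials `H_α = ∂(h·F)/∂z_α`, `α = 1,…,n`, are linearly
independent over `ℂ`. -/
theorem pderiv_hermitian_mul_linearIndependent
    (n l : ℕ) (hn : 1 ≤ n) (hl : 4 ≤ l)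
    (e : Fin n → ℂ) (he : ∀ i, e i = 1 ∨ e i = -1)
    (F : MvPolynomial (Fin n ⊕ Fin n) ℂ) (hF : F ≠ 0)
    (hFz : F.IsWeightedHomogeneous (zWeight n) 2)
    (hFzeta : F.IsWeightedHomogeneous (zetaWeight n) (l - 2)) :
    LinearIndependent ℂ
      (fun α : Fin n =>
        MvPolynomial.pderiv (Sum.inl α)
          ((∑ i : Fin n, MvPolynomial.C (e i) *
              MvPolynomial.X (Sum.inl i) * MvPolynomial.X (Sum.inr i)) * F)) := by
  classical
  have e_sq : ∀ i, e i * e i = 1 := by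
    intro i; rcases he i with h | h <;> rw [h] <;> ring
  have e_ne : ∀ i, e i ≠ 0 := by
    intro i h0
    have := e_sq i
    rw [h0, mul_zero] at this
    exact zero_ne_one this
  set h : MvPolynomial (Fin n ⊕ Fin n) ℂ :=
    ∑ i : Fin n, C (e i) * X (Sum.inl i) * X (Sum.inr i) with hh_def
  have h_ne : h ≠ 0 := by
    intro h0
    have h1 := congrArg (eval (Sum.elim e fun _ => (1 : ℂ))) h0
    rw [hh_def, map_sum, map_zero] at h1
    simp only [eval_mul, eval_C, eval_X, Sum.elim_inl, Sum.elim_inr, mul_one] at h1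
    rw [Finset.sum_congr rfl (fun i _ => e_sq i), Finset.sum_const, nsmul_eq_mul, mul_one] at h1
    have : (n : ℂ) ≠ 0 := by
      exact_mod_cast Nat.cast_ne_zero.2 (by omega)
    simp only [Finset.card_univ, Fintype.card_fin] at h1
    exact this h1
  have h_WH : h.IsWeightedHomogeneous (zWeight n) 1 := by
    apply IsWeightedHomogeneous.sum
    intro i _
    have := ((isWeightedHomogeneous_C (zWeight n) (e i)).mul
      (isWeightedHomogeneous_X ℂ (zWeight n) (Sum.inl i))).mul
      (isWeightedHomogeneous_X ℂ (zWeight n) (Sum.inr i))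
    simpa [zWeight] using this
  rw [Fintype.linearIndependent_iff]
  intro c hc
  set D : MvPolynomial (Fin n ⊕ Fin n) ℂ → MvPolynomial (Fin n ⊕ Fin n) ℂ :=
    fun p => ∑ α : Fin n, C (c α) * pderiv (Sum.inl α) p with hD_def
  have hD0 : D (h * F) = 0 := by
    rw [hD_def, ← hc]
    apply Finset.sum_congr rfl
    intro α _
    rw [smul_eq_C_mul]
  have hD_mul : ∀ p q : MvPolynomial (Fin n ⊕ Fin n) ℂ, D (p * q) = D p * q + p * D q := by
    intro p q
    simp only [hD_def, pderiv_mul, mul_add, Finset.sum_add_distrib, Finset.sum_mul,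
      Finset.mul_sum]
    refine congrArg₂ (· + ·) ?_ ?_ <;> apply Finset.sum_congr rfl <;> intros <;> ring
  have hD_neg : ∀ p : MvPolynomial (Fin n ⊕ Fin n) ℂ, D (-p) = -D p := by
    intro p
    simp [hD_def, Finset.sum_neg_distrib]
  have hD_C : ∀ (t : ℂ) (p : MvPolynomial (Fin n ⊕ Fin n) ℂ), D (C t * p) = C t * D p := by
    intro t p
    simp only [hD_def, pderiv_C_mul, Finset.mul_sum]
    apply Finset.sum_congr rfl
    intros; ring
  set L : MvPolynomial (Fin n ⊕ Fin n) ℂ :=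
    ∑ α : Fin n, C (c α * e α) * X (Sum.inr α) with hL_def
  have hpd : ∀ α, pderiv (Sum.inl α) h = C (e α) * X (Sum.inr α) := by
    intro α
    rw [hh_def, map_sum, Finset.sum_eq_single α]
    · rw [pderiv_mul, pderiv_mul, pderiv_C, pderiv_X_self,
        pderiv_X_of_ne (by simp : (Sum.inr α : Fin n ⊕ Fin n) ≠ Sum.inl α)]
      ring
    · intro b _ hb
      have hb' : (Sum.inl b : Fin n ⊕ Fin n) ≠ Sum.inl α := by simp [hb]
      have hb2 : (Sum.inr b : Fin n ⊕ Fin n) ≠ Sum.inl α := by simp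
      rw [pderiv_mul, pderiv_mul, pderiv_C, pderiv_X_of_ne hb', pderiv_X_of_ne hb2]
      ring
    · simp
  have hDh : D h = L := by
    rw [hD_def, hL_def]
    apply Finset.sum_congr rfl
    intro α _
    rw [hpd α, C_mul]
    ring
  have hDL : D L = 0 := by
    rw [hD_def]
    apply Finset.sum_eq_zero
    intro α _
    have : pderiv (Sum.inl α) L = 0 := by
      rw [hL_def, map_sum]
      apply Finset.sum_eq_zero
      intro γ _
      rw [pderiv_C_mul, pderiv_X_of_ne (by simp), mul_zero]
    rw [this, mul_zero]
  have E1 : L * F + h * D F = 0 := by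
    rw [← hDh, ← hD_mul]
    exact hD0
  intro β
  by_contra hcβ
  have haβ : c β * e β ≠ 0 := mul_ne_zero hcβ (e_ne β)
  have hLne : L ≠ 0 := by
    intro h0
    have h1 := congrArg
      (eval (Sum.elim (fun _ => (0 : ℂ)) (fun γ => if γ = β then 1 else 0))) h0
    rw [hL_def, map_sum, map_zero] at h1
    simp only [eval_mul, eval_C, eval_X, Sum.elim_inr, mul_ite, mul_one, mul_zero,
      Finset.sum_ite_eq', Finset.mem_univ, if_pos] at h1
    exact haβ h1
  by_cases hex : ∃ γ : Fin n, γ ≠ β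
  · -- main case : some other index exists
    obtain ⟨γ, hγ⟩ := hex
    -- L does not divide h
    have hLh : ¬ L ∣ h := by
      rintro ⟨M, hM⟩
      set v : Fin n ⊕ Fin n → ℂ := Sum.elim (fun i => if i = γ then e γ else 0)
        (fun α => if α = γ then 1 else if α = β then -((c γ * e γ) / (c β * e β)) else 0)
        with hv_def
      have hevh : eval v h = 1 := by
        rw [hh_def, map_sum, Finset.sum_eq_single γ]
        · simp only [eval_mul, eval_C, eval_X, hv_def, Sum.elim_inl, Sum.elim_inr]
          simp [e_sq γ]
        · intro b _ hb
          simp [hv_def, hb]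
        · simp
      have hevL : eval v L = 0 := by
        rw [hL_def, map_sum]
        have hsub : ({β, γ} : Finset (Fin n)) ⊆ Finset.univ := Finset.subset_univ _
        rw [← Finset.sum_subset hsub]
        · rw [Finset.sum_pair (Ne.symm hγ)]
          simp only [eval_mul, eval_C, eval_X, hv_def, Sum.elim_inr]
          simp only [hγ, Ne.symm hγ, if_true, if_false, ite_true, ite_false, if_neg, if_pos]
          field_simp
          rw [div_self (e_ne β)]
          ring
        · intro x _ hx
          simp only [Finset.mem_insert, Finset.mem_singleton, not_or] at hx
          simp only [eval_mul, eval_C, eval_X, hv_def, Sum.elim_inr]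
          rw [if_neg hx.2, if_neg hx.1, mul_zero]
      have h2 := congrArg (eval v) hM
      rw [hevh, map_mul, hevL, zero_mul] at h2
      exact one_ne_zero h2
    -- L is prime
    have hLprime : Prime L := by
      set S : MvPolynomial (Fin n ⊕ Fin n) ℂ :=
        ∑ α ∈ Finset.univ.erase β, C (c α * e α) * X (Sum.inr α) with hS_def
      have hLS : L = C (c β * e β) * X (Sum.inr β) + S := by
        rw [hL_def, hS_def]
        exact (Finset.add_sum_erase _ (fun α => C (c α * e α) * X (Sum.inr α))
          (Finset.mem_univ β)).symm
      set f : (Fin n ⊕ Fin n) → MvPolynomial (Fin n ⊕ Fin n) ℂ :=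
        fun s => if s = Sum.inr β then L else X s with hf_def
      set g : (Fin n ⊕ Fin n) → MvPolynomial (Fin n ⊕ Fin n) ℂ :=
        fun s => if s = Sum.inr β then C (c β * e β)⁻¹ * (X (Sum.inr β) - S) else X s
        with hg_def
      have hfS : aeval f S = S := by
        rw [hS_def, map_sum]
        apply Finset.sum_congr rfl
        intro α hα
        have hα' : α ≠ β := (Finset.mem_erase.1 hα).1
        have hfα : f (Sum.inr α) = X (Sum.inr α) := by rw [hf_def]; simp [hα']
        rw [map_mul, aeval_C, aeval_X, hfα, algebraMap_eq]
      have hgS : aeval g S = S := by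
        rw [hS_def, map_sum]
        apply Finset.sum_congr rfl
        intro α hα
        have hα' : α ≠ β := (Finset.mem_erase.1 hα).1
        have hgα : g (Sum.inr α) = X (Sum.inr α) := by rw [hg_def]; simp [hα']
        rw [map_mul, aeval_C, aeval_X, hgα, algebraMap_eq]
      have hcomp1 : (aeval f).comp (aeval g) = AlgHom.id ℂ (MvPolynomial (Fin n ⊕ Fin n) ℂ) := by
        apply MvPolynomial.algHom_ext
        intro s
        rw [AlgHom.comp_apply, AlgHom.id_apply, aeval_X]
        by_cases hs : s = Sum.inr β
        · subst hs
          have hgβ : g (Sum.inr β) = C (c β * e β)⁻¹ * (X (Sum.inr β) - S) := by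
            rw [hg_def]; simp
          have hfβ : f (Sum.inr β) = L := by rw [hf_def]; simp
          rw [hgβ, map_mul, map_sub, aeval_C, aeval_X, hfS, hfβ, hLS, algebraMap_eq]
          have hCC : (C (c β * e β)⁻¹ : MvPolynomial (Fin n ⊕ Fin n) ℂ) * C (c β * e β)
              = 1 := by
            rw [← C_mul, inv_mul_cancel₀ haβ, C_1]
          linear_combination (X (Sum.inr β) : MvPolynomial (Fin n ⊕ Fin n) ℂ) * hCC
        · have hgs : g s = X s := by rw [hg_def]; simp [hs]
          have hfs : f s = X s := by rw [hf_def]; simp [hs]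
          rw [hgs, aeval_X, hfs]
      have hcomp2 : (aeval g).comp (aeval f) = AlgHom.id ℂ (MvPolynomial (Fin n ⊕ Fin n) ℂ) := by
        apply MvPolynomial.algHom_ext
        intro s
        rw [AlgHom.comp_apply, AlgHom.id_apply, aeval_X]
        by_cases hs : s = Sum.inr β
        · subst hs
          have hfβ : f (Sum.inr β) = L := by rw [hf_def]; simp
          have hgβ : g (Sum.inr β) = C (c β * e β)⁻¹ * (X (Sum.inr β) - S) := by
            rw [hg_def]; simp
          rw [hfβ, hLS, map_add, map_mul, aeval_C, aeval_X, hgS, hgβ, algebraMap_eq]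
          have hCC : (C (c β * e β) : MvPolynomial (Fin n ⊕ Fin n) ℂ) * C (c β * e β)⁻¹
              = 1 := by
            rw [← C_mul, mul_inv_cancel₀ haβ, C_1]
          linear_combination ((X (Sum.inr β) : MvPolynomial (Fin n ⊕ Fin n) ℂ) - S) * hCC
        · have hfs : f s = X s := by rw [hf_def]; simp [hs]
          have hgs : g s = X s := by rw [hg_def]; simp [hs]
          rw [hfs, aeval_X, hgs]
      let Φ : MvPolynomial (Fin n ⊕ Fin n) ℂ ≃ₐ[ℂ] MvPolynomial (Fin n ⊕ Fin n) ℂ :=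
        AlgEquiv.ofAlgHom (aeval f) (aeval g) hcomp1 hcomp2
      have hΦX : Φ.toMulEquiv (X (Sum.inr β)) = L := by
        show aeval f (X (Sum.inr β)) = L
        rw [aeval_X, hf_def]
        simp
      rw [← hΦX]
      exact (MulEquiv.prime_iff Φ.toMulEquiv).2 (prime_X_mv _)
    -- the descent step
    have step : ∀ (T G : MvPolynomial (Fin n ⊕ Fin n) ℂ),
        T * (L * G) + h * D G = 0 →
        ∃ G', D G = L * G' ∧ T * G = -(h * G') := by
      intro T G hE
      have hdvd : L ∣ h * D G := by
        refine ⟨-(T * G), ?_⟩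
        linear_combination hE
      rcases hLprime.2.2 h (D G) hdvd with hd | hd
      · exact absurd hd hLh
      obtain ⟨G', hG'⟩ := hd
      refine ⟨G', hG', ?_⟩
      have h2 : L * (T * G + h * G') = 0 := by
        rw [hG'] at hE
        linear_combination hE
      rcases mul_eq_zero.1 h2 with h3 | h3
      · exact absurd h3 hLne
      · linear_combination h3
    have E1' : (1 : MvPolynomial (Fin n ⊕ Fin n) ℂ) * (L * F) + h * D F = 0 := by
      rw [one_mul]; exact E1
    obtain ⟨G₁, hDF, hF1⟩ := step 1 F E1'
    have hF1' : F = -(h * G₁) := by rwa [one_mul] at hF1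
    have hCtwo : (2 : MvPolynomial (Fin n ⊕ Fin n) ℂ) = C (2 : ℂ) := by
      rw [map_ofNat]
    have E2 : (2 : MvPolynomial (Fin n ⊕ Fin n) ℂ) * (L * G₁) + h * D G₁ = 0 := by
      have hD2 : D F = -(L * G₁ + h * D G₁) := by
        rw [hF1', hD_neg, hD_mul, hDh]
      rw [hDF] at hD2
      linear_combination hD2
    obtain ⟨G₂, hDG₁, hG12⟩ := step 2 G₁ E2
    have E3 : (3 : MvPolynomial (Fin n ⊕ Fin n) ℂ) * (L * G₂) + h * D G₂ = 0 := by
      have hD3 : C (2 : ℂ) * D G₁ = -(L * G₂ + h * D G₂) := by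
        rw [← hD_C, ← hCtwo, hG12, hD_neg, hD_mul, hDh]
      rw [hDG₁, ← hCtwo] at hD3
      linear_combination hD3
    obtain ⟨G₃, hDG₂, hG23⟩ := step 3 G₂ E3
    -- homogeneity : D³ F = 0
    have hFz' : F.IsWeightedHomogeneous (zWeight n) (1 + 1) := by
      convert hFz using 1
    have hDF_WH : (D F).IsWeightedHomogeneous (zWeight n) 1 := by
      apply IsWeightedHomogeneous.sum
      intro α _
      have := (isWeightedHomogeneous_C (zWeight n) (c α)).mul (pderiv_isWH α hFz')
      simpa using this
    have hDF_WH' : (D F).IsWeightedHomogeneous (zWeight n) (0 + 1) := by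
      convert hDF_WH using 1
    have hD2F_WH : (D (D F)).IsWeightedHomogeneous (zWeight n) 0 := by
      apply IsWeightedHomogeneous.sum
      intro α _
      have := (isWeightedHomogeneous_C (zWeight n) (c α)).mul (pderiv_isWH α hDF_WH')
      simpa using this
    have hD3F : D (D (D F)) = 0 := by
      rw [hD_def]
      apply Finset.sum_eq_zero
      intro α _
      rw [pderiv_eq_zero_of_isWH_zero α hD2F_WH, mul_zero]
    have hD2F : D (D F) = L * (L * G₂) := by
      rw [hDF, hD_mul, hDL, hDG₁, zero_mul, zero_add]
    have hD3F' : D (D (D F)) = L * (L * (L * G₃)) := by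
      rw [hD2F, hD_mul, hDL, hD_mul, hDL, hDG₂]
      ring
    have hG₃ : G₃ = 0 := by
      have := hD3F'.symm.trans hD3F
      simpa [mul_eq_zero, hLne] using this
    have hG₂0 : G₂ = 0 := by
      rw [hG₃, mul_zero, neg_zero] at hG23
      have h3 : (3 : MvPolynomial (Fin n ⊕ Fin n) ℂ) ≠ 0 := by
        norm_num
      rcases mul_eq_zero.1 hG23 with h | h
      · exact absurd h h3
      · exact h
    have hG₁0 : G₁ = 0 := by
      rw [hG₂0, mul_zero, neg_zero] at hG12
      have h2 : (2 : MvPolynomial (Fin n ⊕ Fin n) ℂ) ≠ 0 := by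
        norm_num
      rcases mul_eq_zero.1 hG12 with h | h
      · exact absurd h h2
      · exact h
    rw [hG₁0, mul_zero, neg_zero] at hF1'
    exact hF hF1'
  · -- degenerate case : β is the only index
    push_neg at hex
    have hone : c β • pderiv (Sum.inl β) (h * F) = 0 := by
      rw [← hc]
      rw [Finset.sum_eq_single (f := fun i => c i • pderiv (Sum.inl i) (h * F)) β
        (fun b _ hb => absurd (hex b) hb) (fun hβ => absurd (Finset.mem_univ β) hβ)]
    have hpd0 : pderiv (Sum.inl β) (h * F) = 0 := by
      rcases smul_eq_zero.1 hone with h0 | h0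
      · exact absurd h0 hcβ
      · exact h0
    have hhF_ne : h * F ≠ 0 := mul_ne_zero h_ne hF
    have hhF_WH : (h * F).IsWeightedHomogeneous (zWeight n) 3 := by
      have := h_WH.mul hFz
      norm_num at this
      exact this
    obtain ⟨s, hs⟩ := (MvPolynomial.support_nonempty.2 hhF_ne)
    have hcoeff : coeff s (h * F) ≠ 0 := mem_support_iff.1 hs
    have hws : Finsupp.weight (zWeight n) s = 3 := hhF_WH hcoeff
    have hex_i : ∃ i, s (Sum.inl i) ≠ 0 := by
      by_contra hno
      push_neg at hno
      have hz : Finsupp.weight (zWeight n) s = 0 := by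
        rw [Finsupp.weight_apply, Finsupp.sum]
        apply Finset.sum_eq_zero
        intro x _
        cases x with
        | inl i => rw [hno i, zero_smul]
        | inr j =>
          have : zWeight n (Sum.inr j) = 0 := rfl
          rw [this, smul_zero]
      rw [hz] at hws
      exact absurd hws (by norm_num)
    obtain ⟨i, hi⟩ := hex_i
    have hiβ : i = β := hex i
    subst hiβ
    have hle : Finsupp.single (Sum.inl i) 1 ≤ s := by
      rw [Finsupp.single_le_iff]; omega
    have hd : (s - Finsupp.single (Sum.inl i) 1) + Finsupp.single (Sum.inl i) 1 = s :=
      tsub_add_cancel_of_le hle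
    have hzero := coeff_pderiv' (Sum.inl i) (h * F) (s - Finsupp.single (Sum.inl i) 1)
    rw [hpd0, coeff_zero, hd] at hzero
    rcases mul_eq_zero.1 hzero.symm with h0 | h0
    · norm_cast at h0
    · exact hcoeff h0
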